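/- Let X be a proper metric space (every closed bounded subset of X is compact). Then for every nonempty finite subset M ⊆ X there exists a connected graph G on X connecting M with |G| = smt(M,X); that is, SMT(M,X) ≠ ∅. -/

import Mathlib

/-- A (simple) graph on a set `X`: a finite vertex set `verts ⊆ X` together with a finite
set of edges, each edge being a 2-element subset of `verts`. -/
structure GraphOn (X : Type*) where
  verts : Finset X
  edges : Finset (Sym2 X)
  mem_verts_of_mem_edges : ∀ e ∈ edges, ∀ x ∈ e, x ∈ verts
  not_isDiag : ∀ e ∈ edges, ¬ e.IsDiag

/-- Two points are adjacent in `G` if they form an edge of `G`. -/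
def GraphOn.Adj {X : Type*} (G : GraphOn X) (x y : X) : Prop := s(x, y) ∈ G.edges

/-- A graph on `X` is connected if its vertex set is nonempty and any two of its vertices
are joined by a path of edges. -/
def GraphOn.IsConnected {X : Type*} (G : GraphOn X) : Prop :=
  G.verts.Nonempty ∧ ∀ x ∈ G.verts, ∀ y ∈ G.verts, Relation.ReflTransGen G.Adj x y

/-- A graph on `X` is acyclic if it contains no cycle, i.e. no injective circular sequence
of at least three vertices with consecutive members adjacent. -/
def GraphOn.IsAcyclic {X : Type*} (G : GraphOn X) : Prop :=
  ¬ ∃ (k : ℕ) (v : ZMod k → X), 3 ≤ k ∧ Function.Injective v ∧ ∀ i, G.Adj (v i) (v (i + 1))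

/-- A tree on `X` is a connected acyclic graph on `X`. -/
def GraphOn.IsTree {X : Type*} (G : GraphOn X) : Prop := G.IsConnected ∧ G.IsAcyclic

/-- The length of a graph on a metric space: the sum of the lengths (distances between
endpoints) of all its edges. -/
noncomputable def GraphOn.length {X : Type*} [MetricSpace X] (G : GraphOn X) : ℝ :=
  ∑ e ∈ G.edges, Sym2.lift ⟨fun x y => dist x y, fun _ _ => dist_comm _ _⟩ e

/-- A graph `G` on `X` connects a finite set `M ⊆ X` if `G` is connected and all points of `M`
are vertices of `G`. -/
def GraphOn.Connects {X : Type*} (G : GraphOn X) (M : Finset X) : Prop :=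
  G.IsConnected ∧ ∀ m ∈ M, m ∈ G.verts

/-- The length of a Steiner minimal tree on a finite subset `M` of a metric space `X`:
the infimum of lengths of connected graphs on `X` connecting `M`. -/
noncomputable def smt (X : Type*) [MetricSpace X] (M : Finset X) : ℝ :=
  sInf {l : ℝ | ∃ G : GraphOn X, G.Connects M ∧ l = G.length}


set_option linter.unusedSectionVars false
namespace SMTAux
open Relation Finset

variable {X : Type*} [DecidableEq X]

def AdjE (E : Finset (Sym2 X)) (x y : X) : Prop := s(x, y) ∈ E

noncomputable def elen [MetricSpace X] (e : Sym2 X) : ℝ :=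
  Sym2.lift ⟨fun x y => dist x y, fun _ _ => dist_comm _ _⟩ e

lemma elen_mk [MetricSpace X] (x y : X) : elen s(x, y) = dist x y := rfl

lemma elen_nonneg [MetricSpace X] (e : Sym2 X) : 0 ≤ elen e := by
  induction e using Sym2.ind with
  | _ x y => exact dist_nonneg

lemma adjE_symm {E : Finset (Sym2 X)} {x y : X} (h : AdjE E x y) : AdjE E y x := by
  unfold AdjE at *; rwa [Sym2.eq_swap]

lemma rtg_symm {E : Finset (Sym2 X)} {x y : X} (h : ReflTransGen (AdjE E) x y) :
    ReflTransGen (AdjE E) y x :=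
  by
    haveI : Std.Symm (AdjE E) := ⟨fun _ _ => adjE_symm⟩
    exact (ReflTransGen.symmetric (r := AdjE E)).symm _ _ h

lemma rtg_mono {E F : Finset (Sym2 X)} (hEF : E ⊆ F) {x y : X}
    (h : ReflTransGen (AdjE E) x y) : ReflTransGen (AdjE F) x y :=
  ReflTransGen.mono (fun _ _ hab => hEF hab) _ _ h

lemma rtg_map {Y : Type*} (f : X → Y) {E : Finset (Sym2 X)} {R : Y → Y → Prop}
    (hstep : ∀ a b, AdjE E a b → ReflTransGen R (f a) (f b)) {x y : X}
    (h : ReflTransGen (AdjE E) x y) : ReflTransGen R (f x) (f y) :=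
  ReflTransGen.lift' f hstep _ _ h

lemma rtg_split {E : Finset (Sym2 X)} (u v : X) {a b : X}
    (h : ReflTransGen (AdjE E) a b) :
    ReflTransGen (AdjE (E.erase s(u, v))) a b ∨
    (ReflTransGen (AdjE (E.erase s(u, v))) a u ∧ ReflTransGen (AdjE (E.erase s(u, v))) v b) ∨
    (ReflTransGen (AdjE (E.erase s(u, v))) a v ∧ ReflTransGen (AdjE (E.erase s(u, v))) u b) := by
  induction h with
  | refl => exact Or.inl ReflTransGen.refl
  | @tail c d hac hcd ih =>
    by_cases hcde : s(c, d) = s(u, v)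
    · rcases Sym2.eq_iff.mp hcde with ⟨hcu, hdv⟩ | ⟨hcv, hdu⟩
      · subst hcu; subst hdv
        rcases ih with h1 | ⟨h1, _⟩ | ⟨h1, _⟩
        · exact Or.inr (Or.inl ⟨h1, ReflTransGen.refl⟩)
        · exact Or.inr (Or.inl ⟨h1, ReflTransGen.refl⟩)
        · exact Or.inl h1
      · subst hcv; subst hdu
        rcases ih with h1 | ⟨h1, _⟩ | ⟨h1, _⟩
        · exact Or.inr (Or.inr ⟨h1, ReflTransGen.refl⟩)
        · exact Or.inl h1
        · exact Or.inr (Or.inr ⟨h1, ReflTransGen.refl⟩)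
    · have hstep : AdjE (E.erase s(u, v)) c d := Finset.mem_erase.mpr ⟨hcde, hcd⟩
      rcases ih with h1 | ⟨h1, h2⟩ | ⟨h1, h2⟩
      · exact Or.inl (h1.tail hstep)
      · exact Or.inr (Or.inl ⟨h1, h2.tail hstep⟩)
      · exact Or.inr (Or.inr ⟨h1, h2.tail hstep⟩)

lemma rtg_confine {E F : Finset (Sym2 X)} {P : X → Prop}
    (hstep : ∀ x y, P x → AdjE E x y → P y ∧ AdjE F x y) {x y : X}
    (hx : P x) (h : ReflTransGen (AdjE E) x y) :
    P y ∧ ReflTransGen (AdjE F) x y := by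
  induction h with
  | refl => exact ⟨hx, ReflTransGen.refl⟩
  | @tail c d hac hcd ih =>
    obtain ⟨hPc, hw⟩ := ih
    obtain ⟨hPd, hF⟩ := hstep c d hPc hcd
    exact ⟨hPd, hw.tail hF⟩

lemma dist_le_sum [MetricSpace X] (n : ℕ) :
    ∀ E : Finset (Sym2 X), E.card ≤ n → ∀ {x y : X},
      ReflTransGen (AdjE E) x y → dist x y ≤ ∑ e ∈ E, elen e := by
  induction n with
  | zero =>
    intro E hE x y h
    have hE0 : E = ∅ := Finset.card_eq_zero.mp (Nat.le_zero.mp hE)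
    subst hE0
    induction h with
    | refl => simp
    | tail _ hcd _ => exact absurd hcd (Finset.notMem_empty _)
  | succ n ih =>
    intro E hE x y h
    rcases h.cases_head with rfl | ⟨z, hxz, hzy⟩
    · simpa using Finset.sum_nonneg fun e _ => elen_nonneg e
    · have hxzE : s(x, z) ∈ E := hxz
      have hcard : (E.erase s(x, z)).card ≤ n := by
        have := Finset.card_erase_of_mem hxzE
        omega
      have hsum : ∑ e ∈ E.erase s(x, z), elen e + elen s(x, z) = ∑ e ∈ E, elen e :=
        Finset.sum_erase_add E _ hxzE
      rcases rtg_split x z hzy with h1 | ⟨_, h1⟩ | ⟨_, h1⟩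
      · have := ih _ hcard h1
        have htri := dist_triangle x z y
        rw [elen_mk] at hsum
        linarith
      · have := ih _ hcard h1
        have htri := dist_triangle x z y
        rw [elen_mk] at hsum
        linarith
      · -- h1 : ReflTransGen x y in erased
        have := ih _ hcard h1
        have hnn : 0 ≤ elen s(x, z) := elen_nonneg _
        linarith

def Spanning (V : Finset X) (E : Finset (Sym2 X)) : Prop :=
  ∀ x ∈ V, ∀ y ∈ V, Relation.ReflTransGen (AdjE E) x y

lemma card_le_of_minimal_spanning (n : ℕ) :
    ∀ (V : Finset X) (E : Finset (Sym2 X)), E.card ≤ n →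
      V.Nonempty →
      (∀ e ∈ E, ∀ x ∈ e, x ∈ V) →
      (∀ e ∈ E, ¬ e.IsDiag) →
      Spanning V E →
      (∀ F ⊆ E, Spanning V F → F = E) →
      E.card + 1 ≤ V.card := by
  classical
  induction n with
  | zero =>
    intro V E hE hV _ _ _ _
    have : E.card = 0 := Nat.le_zero.mp hE
    rw [this]
    exact Nat.succ_le_of_lt (Finset.card_pos.mpr hV)
  | succ n ih =>
    intro V E hEn hV hend hnd hsp hmin
    rcases Finset.eq_empty_or_nonempty E with rfl | ⟨e, he⟩
    · simpa using Finset.card_pos.mpr hV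
    obtain ⟨u, v, rfl⟩ : ∃ a b, e = s(a, b) := Sym2.ind (fun a b => ⟨a, b, rfl⟩) e
    have huv : u ≠ v := fun h => hnd _ he (Sym2.mk_isDiag_iff.mpr h)
    have huV : u ∈ V := hend _ he u (Sym2.mem_mk_left u v)
    have hvV : v ∈ V := hend _ he v (Sym2.mem_mk_right u v)
    set E₂ := E.erase s(u, v) with hE₂
    -- u and v are not connected in E₂
    have hno : ¬ Relation.ReflTransGen (AdjE E₂) u v := by
      intro hcon
      have hspE₂ : Spanning V E₂ := by
        intro x hx y hy
        rcases rtg_split u v (hsp x hx y hy) with h1 | ⟨h1, h2⟩ | ⟨h1, h2⟩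
        · exact h1
        · exact (h1.trans hcon).trans h2
        · exact (h1.trans (rtg_symm hcon)).trans h2
      have := hmin E₂ (Finset.erase_subset _ _) hspE₂
      exact (Finset.erase_ne_self.mpr he) this
    set U := V.filter (fun x => Relation.ReflTransGen (AdjE E₂) u x) with hU
    set W := V \ U with hW
    have huU : u ∈ U := Finset.mem_filter.mpr ⟨huV, Relation.ReflTransGen.refl⟩
    have hvW : v ∈ W := Finset.mem_sdiff.mpr ⟨hvV, fun hvU => hno (Finset.mem_filter.mp hvU).2⟩
    -- step closure for U
    have hstepU : ∀ x y : X, x ∈ U → AdjE E₂ x y → y ∈ U := by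
      intro x y hx hxy
      have hyV : y ∈ V := hend _ (Finset.mem_of_mem_erase hxy) y (Sym2.mem_mk_right x y)
      exact Finset.mem_filter.mpr ⟨hyV, (Finset.mem_filter.mp hx).2.tail hxy⟩
    have hstepW : ∀ x y : X, x ∈ W → AdjE E₂ x y → y ∈ W := by
      intro x y hx hxy
      have hyV : y ∈ V := hend _ (Finset.mem_of_mem_erase hxy) y (Sym2.mem_mk_right x y)
      refine Finset.mem_sdiff.mpr ⟨hyV, fun hyU => ?_⟩
      exact (Finset.mem_sdiff.mp hx).2 (hstepU y x hyU (adjE_symm hxy))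
    set EU := E₂.filter (fun e => ∀ x ∈ e, x ∈ U) with hEU
    set EW := E₂.filter (fun e => ∀ x ∈ e, x ∈ W) with hEW
    have hEUsub : EU ⊆ E₂ := Finset.filter_subset _ _
    have hEWsub : EW ⊆ E₂ := Finset.filter_subset _ _
    have hsplit : E₂ = EU ∪ EW := by
      apply Finset.Subset.antisymm
      · intro e' he'
        obtain ⟨a, b, rfl⟩ : ∃ a b, e' = s(a, b) := Sym2.ind (fun a b => ⟨a, b, rfl⟩) e'
        have haV : a ∈ V := hend _ (Finset.mem_of_mem_erase he') a (Sym2.mem_mk_left a b)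
        by_cases haU : a ∈ U
        · have hbU : b ∈ U := hstepU a b haU he'
          refine Finset.mem_union_left _ (Finset.mem_filter.mpr ⟨he', fun x hx => ?_⟩)
          rcases Sym2.mem_iff.mp hx with rfl | rfl
          · exact haU
          · exact hbU
        · have haW : a ∈ W := Finset.mem_sdiff.mpr ⟨haV, haU⟩
          have hbW : b ∈ W := hstepW a b haW he'
          refine Finset.mem_union_right _ (Finset.mem_filter.mpr ⟨he', fun x hx => ?_⟩)
          rcases Sym2.mem_iff.mp hx with rfl | rfl
          · exact haW
          · exact hbW
      · exact Finset.union_subset hEUsub hEWsub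
    have hdisj : Disjoint EU EW := by
      rw [Finset.disjoint_left]
      intro e' heU heW
      obtain ⟨a, b, rfl⟩ : ∃ a b, e' = s(a, b) := Sym2.ind (fun a b => ⟨a, b, rfl⟩) e'
      have haU : a ∈ U := (Finset.mem_filter.mp heU).2 a (Sym2.mem_mk_left a b)
      have haW : a ∈ W := (Finset.mem_filter.mp heW).2 a (Sym2.mem_mk_left a b)
      exact (Finset.mem_sdiff.mp haW).2 haU
    -- connect all of W to v
    have hWconn : ∀ x ∈ W, Relation.ReflTransGen (AdjE E₂) v x := by
      intro x hx
      have hxV : x ∈ V := (Finset.mem_sdiff.mp hx).1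
      rcases rtg_split u v (hsp v hvV x hxV) with h1 | ⟨h1, h2⟩ | ⟨_, h2⟩
      · exact h1
      · exact h2
      · exfalso
        exact (Finset.mem_sdiff.mp hx).2 (Finset.mem_filter.mpr ⟨hxV, h2⟩)
    -- spanning of parts
    have hspU : Spanning U EU := by
      intro x hx y hy
      have hx2 := (Finset.mem_filter.mp hx).2
      have hy2 := (Finset.mem_filter.mp hy).2
      have hxy : Relation.ReflTransGen (AdjE E₂) x y := (rtg_symm hx2).trans hy2
      exact (rtg_confine (fun a b ha hab =>
        ⟨hstepU a b ha hab, Finset.mem_filter.mpr ⟨hab, fun z hz => by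
          rcases Sym2.mem_iff.mp hz with h | h
          · rw [h]; exact ha
          · rw [h]; exact hstepU a b ha hab⟩⟩) hx hxy).2
    have hspW : Spanning W EW := by
      intro x hx y hy
      have hxy : Relation.ReflTransGen (AdjE E₂) x y :=
        (rtg_symm (hWconn x hx)).trans (hWconn y hy)
      exact (rtg_confine (fun a b ha hab =>
        ⟨hstepW a b ha hab, Finset.mem_filter.mpr ⟨hab, fun z hz => by
          rcases Sym2.mem_iff.mp hz with h | h
          · rw [h]; exact ha
          · rw [h]; exact hstepW a b ha hab⟩⟩) hx hxy).2
    -- minimality of parts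
    have hsuvE₂ : s(u, v) ∉ E₂ := Finset.notMem_erase _ _
    have hminU : ∀ F ⊆ EU, Spanning U F → F = EU := by
      intro F hF hspF
      have hF' : F ∪ {s(u, v)} ∪ EW ⊆ E := by
        intro e' he'
        rcases Finset.mem_union.mp he' with h1 | h1
        · rcases Finset.mem_union.mp h1 with h2 | h2
          · exact Finset.mem_of_mem_erase (hEUsub (hF h2))
          · rw [Finset.mem_singleton.mp h2]; exact he
        · exact Finset.mem_of_mem_erase (hEWsub h1)
      have hconn_u : ∀ x ∈ V, Relation.ReflTransGen (AdjE (F ∪ {s(u, v)} ∪ EW)) x u := by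
        intro x hx
        by_cases hxU : x ∈ U
        · exact rtg_mono (fun e' h => Finset.mem_union_left _ (Finset.mem_union_left _ h))
            (hspF x hxU u huU)
        · have hxW : x ∈ W := Finset.mem_sdiff.mpr ⟨hx, hxU⟩
          have h1 : Relation.ReflTransGen (AdjE (F ∪ {s(u, v)} ∪ EW)) x v :=
            rtg_mono (fun e' h => Finset.mem_union_right _ h) (hspW x hxW v hvW)
          refine h1.tail ?_
          show s(v, u) ∈ _
          rw [Sym2.eq_swap]
          exact Finset.mem_union_left _ (Finset.mem_union_right _ (Finset.mem_singleton_self _))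
      have hspF' : Spanning V (F ∪ {s(u, v)} ∪ EW) := by
        intro x hx y hy
        exact (hconn_u x hx).trans (rtg_symm (hconn_u y hy))
      have heq := hmin _ hF' hspF'
      apply Finset.Subset.antisymm hF
      intro e' he'
      have he'E : e' ∈ E := Finset.mem_of_mem_erase (hEUsub he')
      rw [← heq] at he'E
      rcases Finset.mem_union.mp he'E with h1 | h1
      · rcases Finset.mem_union.mp h1 with h2 | h2
        · exact h2
        · exfalso
          rw [Finset.mem_singleton.mp h2] at he'
          exact hsuvE₂ (hEUsub he')
      · exact absurd h1 (Finset.disjoint_left.mp hdisj he')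
    have hminW : ∀ F ⊆ EW, Spanning W F → F = EW := by
      intro F hF hspF
      have hF' : EU ∪ {s(u, v)} ∪ F ⊆ E := by
        intro e' he'
        rcases Finset.mem_union.mp he' with h1 | h1
        · rcases Finset.mem_union.mp h1 with h2 | h2
          · exact Finset.mem_of_mem_erase (hEUsub h2)
          · rw [Finset.mem_singleton.mp h2]; exact he
        · exact Finset.mem_of_mem_erase (hEWsub (hF h1))
      have hconn_u : ∀ x ∈ V, Relation.ReflTransGen (AdjE (EU ∪ {s(u, v)} ∪ F)) x u := by
        intro x hx
        by_cases hxU : x ∈ U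
        · exact rtg_mono (fun e' h => Finset.mem_union_left _ (Finset.mem_union_left _ h))
            (hspU x hxU u huU)
        · have hxW : x ∈ W := Finset.mem_sdiff.mpr ⟨hx, hxU⟩
          have h1 : Relation.ReflTransGen (AdjE (EU ∪ {s(u, v)} ∪ F)) x v :=
            rtg_mono (fun e' h => Finset.mem_union_right _ h) (hspF x hxW v hvW)
          refine h1.tail ?_
          show s(v, u) ∈ _
          rw [Sym2.eq_swap]
          exact Finset.mem_union_left _ (Finset.mem_union_right _ (Finset.mem_singleton_self _))
      have hspF' : Spanning V (EU ∪ {s(u, v)} ∪ F) := by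
        intro x hx y hy
        exact (hconn_u x hx).trans (rtg_symm (hconn_u y hy))
      have heq := hmin _ hF' hspF'
      apply Finset.Subset.antisymm hF
      intro e' he'
      have he'E : e' ∈ E := Finset.mem_of_mem_erase (hEWsub he')
      rw [← heq] at he'E
      rcases Finset.mem_union.mp he'E with h1 | h1
      · rcases Finset.mem_union.mp h1 with h2 | h2
        · exact absurd h2 (Finset.disjoint_right.mp hdisj he')
        · exfalso
          rw [Finset.mem_singleton.mp h2] at he'
          exact hsuvE₂ (hEWsub he')
      · exact h1
    -- cardinalities
    have hcardE : E.card = E₂.card + 1 := by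
      rw [hE₂, Finset.card_erase_of_mem he]
      have : 1 ≤ E.card := Finset.card_pos.mpr ⟨_, he⟩
      omega
    have hcardE₂ : E₂.card = EU.card + EW.card := by
      rw [hsplit, Finset.card_union_of_disjoint hdisj]
    have hUV : U.card + W.card = V.card := by
      have hUsub : U ⊆ V := by rw [hU]; exact Finset.filter_subset _ _
      have := Finset.card_sdiff_add_card_eq_card hUsub
      rw [hW]
      omega
    have hendU : ∀ e' ∈ EU, ∀ x ∈ e', x ∈ U := fun e' h => (Finset.mem_filter.mp h).2
    have hendW : ∀ e' ∈ EW, ∀ x ∈ e', x ∈ W := fun e' h => (Finset.mem_filter.mp h).2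
    have hndU : ∀ e' ∈ EU, ¬ e'.IsDiag := fun e' h =>
      hnd e' (Finset.mem_of_mem_erase (hEUsub h))
    have hndW : ∀ e' ∈ EW, ¬ e'.IsDiag := fun e' h =>
      hnd e' (Finset.mem_of_mem_erase (hEWsub h))
    have hcardU : EU.card ≤ n := by
      have := Finset.card_le_card hEUsub
      omega
    have hcardW : EW.card ≤ n := by
      have := Finset.card_le_card hEWsub
      omega
    have h1 := ih U EU hcardU ⟨u, huU⟩ hendU hndU hspU hminU
    have h2 := ih W EW hcardW ⟨v, hvW⟩ hendW hndW hspW hminW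
    omega

lemma exists_minimal_spanning (V : Finset X) (E : Finset (Sym2 X)) (hsp : Spanning V E) :
    ∃ E' ⊆ E, Spanning V E' ∧ ∀ F ⊆ E', Spanning V F → F = E' := by
  classical
  set S := E.powerset.filter (fun E' => Spanning V E') with hS
  have hES : E ∈ S := Finset.mem_filter.mpr ⟨Finset.mem_powerset_self E, hsp⟩
  obtain ⟨E', hE'S, hmin⟩ := Finset.exists_min_image S Finset.card ⟨E, hES⟩
  obtain ⟨hE'pow, hE'sp⟩ := Finset.mem_filter.mp hE'S
  refine ⟨E', Finset.mem_powerset.mp hE'pow, hE'sp, fun F hF hspF => ?_⟩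
  have hFS : F ∈ S := Finset.mem_filter.mpr
    ⟨Finset.mem_powerset.mpr (hF.trans (Finset.mem_powerset.mp hE'pow)), hspF⟩
  exact Finset.eq_of_subset_of_card_le hF (hmin F hFS)
lemma length_eq [MetricSpace X] (G : GraphOn X) : G.length = ∑ e ∈ G.edges, elen e := rfl

lemma length_nonneg [MetricSpace X] (G : GraphOn X) : 0 ≤ G.length :=
  Finset.sum_nonneg fun e _ => elen_nonneg e

lemma handshake (G : GraphOn X) :
    ∑ x ∈ G.verts, (G.edges.filter (fun e => x ∈ e)).card = 2 * G.edges.card := by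
  classical
  have : ∑ x ∈ G.verts, (G.edges.filter (fun e => x ∈ e)).card
      = ∑ e ∈ G.edges, (G.verts.filter (fun x => x ∈ e)).card := by
    simp only [Finset.card_filter]
    exact Finset.sum_comm
  rw [this]
  have h2 : ∀ e ∈ G.edges, (G.verts.filter (fun x => x ∈ e)).card = 2 := by
    intro e he
    obtain ⟨a, b, rfl⟩ : ∃ a b, e = s(a, b) := Sym2.ind (fun a b => ⟨a, b, rfl⟩) e
    have hab : a ≠ b := fun h => G.not_isDiag _ he (Sym2.mk_isDiag_iff.mpr h)
    have haV : a ∈ G.verts := G.mem_verts_of_mem_edges _ he a (Sym2.mem_mk_left a b)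
    have hbV : b ∈ G.verts := G.mem_verts_of_mem_edges _ he b (Sym2.mem_mk_right a b)
    have : G.verts.filter (fun x => x ∈ s(a, b)) = {a, b} := by
      ext z
      simp only [Finset.mem_filter, Sym2.mem_iff, Finset.mem_insert, Finset.mem_singleton]
      constructor
      · rintro ⟨_, h⟩; exact h
      · rintro (rfl | rfl)
        · exact ⟨haV, Or.inl rfl⟩
        · exact ⟨hbV, Or.inr rfl⟩
    rw [this, Finset.card_pair hab]
  rw [Finset.sum_congr rfl h2]
  simp [mul_comm]

lemma sum_image_le {α β : Type*} [DecidableEq β] (s : Finset α) (f : α → β) (g : β → ℝ)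
    (hg : ∀ b, 0 ≤ g b) : ∑ b ∈ s.image f, g b ≤ ∑ a ∈ s, g (f a) := by
  classical
  induction s using Finset.induction with
  | empty => simp
  | @insert a s ha ih =>
    rw [Finset.image_insert, Finset.sum_insert ha]
    by_cases hfa : f a ∈ s.image f
    · rw [Finset.insert_eq_self.mpr hfa]
      linarith [hg (f a)]
    · rw [Finset.sum_insert hfa]
      linarith

lemma degree_pos (G : GraphOn X) (hc : G.IsConnected) {v w : X} (hv : v ∈ G.verts)
    (hw : w ∈ G.verts) (hvw : v ≠ w) :
    0 < (G.edges.filter (fun e => v ∈ e)).card := by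
  classical
  rcases (hc.2 v hv w hw).cases_head with h | ⟨z, hstep, _⟩
  · exact absurd h hvw
  · exact Finset.card_pos.mpr ⟨s(v, z), Finset.mem_filter.mpr ⟨hstep, Sym2.mem_mk_left _ _⟩⟩

lemma deg1_reduce [MetricSpace X] (G : GraphOn X) (hGc : G.IsConnected) (v u : X)
    (hvV : v ∈ G.verts) (huv : u ≠ v)
    (hfil : G.edges.filter (fun e => v ∈ e) = {s(v, u)}) :
    ∃ G'' : GraphOn X, G''.IsConnected ∧ G''.verts = G.verts.erase v ∧
      G''.verts.card + G''.edges.card < G.verts.card + G.edges.card ∧ G''.length ≤ G.length := by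
  classical
  have hedge : s(v, u) ∈ G.edges := by
    have h1 : s(v, u) ∈ G.edges.filter (fun e => v ∈ e) := by
      rw [hfil]; exact Finset.mem_singleton_self _
    exact (Finset.mem_filter.mp h1).1
  have huV : u ∈ G.verts := G.mem_verts_of_mem_edges _ hedge u (Sym2.mem_mk_right v u)
  have hvnot : ∀ e ∈ G.edges.erase s(v, u), v ∉ e := by
    intro e hel hve
    have h1 : e ∈ G.edges.filter (fun e => v ∈ e) :=
      Finset.mem_filter.mpr ⟨Finset.mem_of_mem_erase hel, hve⟩
    rw [hfil, Finset.mem_singleton] at h1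
    exact (Finset.mem_erase.mp hel).1 h1
  refine ⟨⟨G.verts.erase v, G.edges.erase s(v, u), ?_, ?_⟩, ⟨?_, ?_⟩, rfl, ?_, ?_⟩
  · intro e he x hx
    exact Finset.mem_erase.mpr ⟨fun h => hvnot e he (h ▸ hx),
      G.mem_verts_of_mem_edges e (Finset.mem_of_mem_erase he) x hx⟩
  · intro e he; exact G.not_isDiag e (Finset.mem_of_mem_erase he)
  · exact ⟨u, Finset.mem_erase.mpr ⟨huv, huV⟩⟩
  · intro x hx y hy
    have hx' := Finset.mem_of_mem_erase hx
    have hy' := Finset.mem_of_mem_erase hy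
    have hmap : ∀ a b, AdjE G.edges a b →
        Relation.ReflTransGen (AdjE (G.edges.erase s(v, u)))
          (if a = v then u else a) (if b = v then u else b) := by
      intro a b hab
      by_cases hav : a = v
      · have hb : b = u := by
          have h1 : s(a, b) ∈ G.edges.filter (fun e => v ∈ e) :=
            Finset.mem_filter.mpr ⟨hab, hav ▸ Sym2.mem_mk_left a b⟩
          rw [hfil, Finset.mem_singleton, hav] at h1
          exact Sym2.congr_right.mp h1
        rw [if_pos hav, hb, if_neg huv]
      · by_cases hbv : b = v
        · have ha : a = u := by
            have h1 : s(a, b) ∈ G.edges.filter (fun e => v ∈ e) :=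
              Finset.mem_filter.mpr ⟨hab, hbv ▸ Sym2.mem_mk_right a b⟩
            rw [hfil, Finset.mem_singleton] at h1
            rcases Sym2.eq_iff.mp h1 with ⟨h2, _⟩ | ⟨h2, _⟩
            · exact absurd h2 hav
            · exact h2
          rw [if_neg hav, if_pos hbv, ha]
        · rw [if_neg hav, if_neg hbv]
          refine Relation.ReflTransGen.single (Finset.mem_erase.mpr ⟨fun h => ?_, hab⟩)
          rcases Sym2.eq_iff.mp h with ⟨h1, _⟩ | ⟨_, h1⟩
          · exact hav h1
          · exact hbv h1
    have := rtg_map (fun z => if z = v then u else z) hmap (hGc.2 x hx' y hy')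
    rwa [if_neg (Finset.mem_erase.mp hx).1, if_neg (Finset.mem_erase.mp hy).1] at this
  · dsimp only
    have h1 := Finset.card_erase_of_mem hvV
    have h2 := Finset.card_erase_of_mem hedge
    have h3 := Finset.card_pos.mpr (⟨v, hvV⟩ : G.verts.Nonempty)
    have h4 := Finset.card_pos.mpr (⟨_, hedge⟩ : G.edges.Nonempty)
    omega
  · exact Finset.sum_le_sum_of_subset_of_nonneg (Finset.erase_subset _ _)
      (fun e _ _ => elen_nonneg e)

lemma deg2_reduce [MetricSpace X] (G : GraphOn X) (hGc : G.IsConnected) (v u w : X)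
    (hvV : v ∈ G.verts) (huv : u ≠ v) (hwv : w ≠ v) (huw : u ≠ w)
    (hfil : G.edges.filter (fun e => v ∈ e) = {s(v, u), s(v, w)}) :
    ∃ G'' : GraphOn X, G''.IsConnected ∧ G''.verts = G.verts.erase v ∧
      G''.verts.card + G''.edges.card < G.verts.card + G.edges.card ∧ G''.length ≤ G.length := by
  classical
  have hpairsub : ({s(v, u), s(v, w)} : Finset (Sym2 X)) ⊆ G.edges := by
    rw [← hfil]; exact Finset.filter_subset _ _
  have hedge1 : s(v, u) ∈ G.edges := hpairsub (Finset.mem_insert_self _ _)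
  have hedge2 : s(v, w) ∈ G.edges :=
    hpairsub (Finset.mem_insert_of_mem (Finset.mem_singleton_self _))
  have hne12 : s(v, u) ≠ s(v, w) := fun h => huw (Sym2.congr_right.mp h)
  have huV : u ∈ G.verts := G.mem_verts_of_mem_edges _ hedge1 u (Sym2.mem_mk_right v u)
  have hwVert : w ∈ G.verts := G.mem_verts_of_mem_edges _ hedge2 w (Sym2.mem_mk_right v w)
  set E'' := insert s(u, w) (G.edges \ {s(v, u), s(v, w)}) with hE''
  have hvnot : ∀ e ∈ G.edges \ ({s(v, u), s(v, w)} : Finset (Sym2 X)), v ∉ e := by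
    intro e hel hve
    obtain ⟨heE, hnot⟩ := Finset.mem_sdiff.mp hel
    exact hnot (by rw [← hfil] at *; exact (hfil ▸ Finset.mem_filter.mpr ⟨heE, hve⟩))
  refine ⟨⟨G.verts.erase v, E'', ?_, ?_⟩, ⟨?_, ?_⟩, rfl, ?_, ?_⟩
  · intro e he x hx
    rcases Finset.mem_insert.mp he with rfl | he'
    · rcases Sym2.mem_iff.mp hx with rfl | rfl
      · exact Finset.mem_erase.mpr ⟨huv, huV⟩
      · exact Finset.mem_erase.mpr ⟨hwv, hwVert⟩
    · refine Finset.mem_erase.mpr ⟨fun h => hvnot e he' (h ▸ hx),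
        G.mem_verts_of_mem_edges e (Finset.mem_sdiff.mp he').1 x hx⟩
  · intro e he
    rcases Finset.mem_insert.mp he with rfl | he'
    · rw [Sym2.mk_isDiag_iff]; exact huw
    · exact G.not_isDiag e (Finset.mem_sdiff.mp he').1
  · exact ⟨u, Finset.mem_erase.mpr ⟨huv, huV⟩⟩
  · intro x hx y hy
    have hx' := Finset.mem_of_mem_erase hx
    have hy' := Finset.mem_of_mem_erase hy
    have hmap : ∀ a b, AdjE G.edges a b →
        Relation.ReflTransGen (AdjE E'')
          (if a = v then u else a) (if b = v then u else b) := by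
      intro a b hab
      by_cases hav : a = v
      · have h1 : s(a, b) ∈ ({s(v, u), s(v, w)} : Finset (Sym2 X)) := by
          rw [← hfil]
          exact Finset.mem_filter.mpr ⟨hab, hav ▸ Sym2.mem_mk_left a b⟩
        rw [hav] at h1
        rcases Finset.mem_insert.mp h1 with h2 | h2
        · have hb : b = u := Sym2.congr_right.mp h2
          rw [if_pos hav, hb, if_neg huv]
        · have hb : b = w := Sym2.congr_right.mp (Finset.mem_singleton.mp h2)
          rw [if_pos hav, hb, if_neg hwv]
          exact Relation.ReflTransGen.single (Finset.mem_insert_self _ _)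
      · by_cases hbv : b = v
        · have h1 : s(a, b) ∈ ({s(v, u), s(v, w)} : Finset (Sym2 X)) := by
            rw [← hfil]
            exact Finset.mem_filter.mpr ⟨hab, hbv ▸ Sym2.mem_mk_right a b⟩
          rw [hbv] at h1
          rcases Finset.mem_insert.mp h1 with h2 | h2
          · have ha : a = u := by
              rcases Sym2.eq_iff.mp h2 with ⟨h3, _⟩ | ⟨h3, _⟩
              · exact absurd h3 hav
              · exact h3
            rw [if_neg hav, if_pos hbv, ha]
          · have ha : a = w := by
              rcases Sym2.eq_iff.mp (Finset.mem_singleton.mp h2) with ⟨h3, _⟩ | ⟨h3, _⟩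
              · exact absurd h3 hav
              · exact h3
            rw [if_neg hav, if_pos hbv, ha]
            refine Relation.ReflTransGen.single ?_
            show s(w, u) ∈ E''
            rw [Sym2.eq_swap]
            exact Finset.mem_insert_self _ _
        · rw [if_neg hav, if_neg hbv]
          refine Relation.ReflTransGen.single (Finset.mem_insert_of_mem
            (Finset.mem_sdiff.mpr ⟨hab, fun h => ?_⟩))
          rcases Finset.mem_insert.mp h with h2 | h2
          · rcases Sym2.eq_iff.mp h2 with ⟨h3, _⟩ | ⟨_, h3⟩
            · exact hav h3
            · exact hbv h3
          · rcases Sym2.eq_iff.mp (Finset.mem_singleton.mp h2) with ⟨h3, _⟩ | ⟨_, h3⟩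
            · exact hav h3
            · exact hbv h3
    have := rtg_map (fun z => if z = v then u else z) hmap (hGc.2 x hx' y hy')
    rwa [if_neg (Finset.mem_erase.mp hx).1, if_neg (Finset.mem_erase.mp hy).1] at this
  · dsimp only
    have h1 := Finset.card_erase_of_mem hvV
    have h2 : E''.card ≤ (G.edges \ ({s(v, u), s(v, w)} : Finset (Sym2 X))).card + 1 := by
      rw [hE'']; exact Finset.card_insert_le _ _
    have h3 : (G.edges \ ({s(v, u), s(v, w)} : Finset (Sym2 X))).card
        = G.edges.card - 2 := by
      rw [Finset.card_sdiff_of_subset hpairsub, Finset.card_pair hne12]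
    have h4 : 2 ≤ G.edges.card := by
      have := Finset.card_le_card hpairsub
      rwa [Finset.card_pair hne12] at this
    have h5 := Finset.card_pos.mpr (⟨v, hvV⟩ : G.verts.Nonempty)
    omega
  · show ∑ e ∈ E'', elen e ≤ G.length
    have h1 : ∑ e ∈ E'', elen e
        ≤ elen s(u, w) + ∑ e ∈ G.edges \ ({s(v, u), s(v, w)} : Finset (Sym2 X)), elen e := by
      by_cases hmem : s(u, w) ∈ G.edges \ ({s(v, u), s(v, w)} : Finset (Sym2 X))
      · rw [hE'', Finset.insert_eq_self.mpr hmem]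
        linarith [elen_nonneg s(u, w)]
      · rw [hE'', Finset.sum_insert hmem]
    have h2 : ∑ e ∈ G.edges \ ({s(v, u), s(v, w)} : Finset (Sym2 X)), elen e
        + (elen s(v, u) + elen s(v, w)) = G.length := by
      rw [length_eq, ← Finset.sum_sdiff hpairsub]
      congr 1
      rw [Finset.sum_pair hne12]
    have h3 : elen s(u, w) ≤ elen s(v, u) + elen s(v, w) := by
      rw [elen_mk, elen_mk, elen_mk, dist_comm v u]
      exact dist_triangle u v w
    linarith
lemma reduce [MetricSpace X] (M : Finset X) (hMne : M.Nonempty) :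
    ∀ (k : ℕ) (G : GraphOn X), G.verts.card + G.edges.card ≤ k → G.Connects M →
      ∃ G' : GraphOn X, G'.Connects M ∧ G'.length ≤ G.length ∧ G'.verts.card ≤ 2 * M.card := by
  classical
  intro k
  induction k with
  | zero =>
    intro G hk hc
    have := Finset.card_pos.mpr hc.1.1
    omega
  | succ k ih =>
    intro G hk hc
    by_cases hcard : G.verts.card ≤ 2 * M.card
    · exact ⟨G, hc, le_refl _, hcard⟩
    push_neg at hcard
    have hM1 : 1 ≤ M.card := Finset.card_pos.mpr hMne
    have hverts2 : 2 ≤ G.verts.card := by omega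
    by_cases hdeg : ∃ v ∈ G.verts, v ∉ M ∧ (G.edges.filter (fun e => v ∈ e)).card ≤ 2
    · obtain ⟨v, hvV, hvM, hd⟩ := hdeg
      obtain ⟨w, hwV, hwv⟩ := Finset.exists_mem_ne (show 1 < G.verts.card by omega) v
      have hpos : 0 < (G.edges.filter (fun e => v ∈ e)).card :=
        degree_pos G hc.1 hvV hwV (Ne.symm hwv)
      have hG'' : ∃ G'' : GraphOn X, G''.IsConnected ∧ G''.verts = G.verts.erase v ∧
          G''.verts.card + G''.edges.card < G.verts.card + G.edges.card ∧
          G''.length ≤ G.length := by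
        rcases (by omega : (G.edges.filter (fun e => v ∈ e)).card = 1 ∨
            (G.edges.filter (fun e => v ∈ e)).card = 2) with h1 | h2
        · obtain ⟨e1, he1⟩ := Finset.card_eq_one.mp h1
          have he1f : e1 ∈ G.edges.filter (fun e => v ∈ e) := by
            rw [he1]; exact Finset.mem_singleton_self _
          have hve1 : v ∈ e1 := (Finset.mem_filter.mp he1f).2
          obtain ⟨u, rfl⟩ := Sym2.mem_iff_exists.mp hve1
          have huv : u ≠ v := fun h =>
            G.not_isDiag _ (Finset.mem_filter.mp he1f).1 (Sym2.mk_isDiag_iff.mpr h.symm)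
          exact deg1_reduce G hc.1 v u hvV huv he1
        · obtain ⟨e1, e2, hne, hpair⟩ := Finset.card_eq_two.mp h2
          have he1f : e1 ∈ G.edges.filter (fun e => v ∈ e) := by
            rw [hpair]; exact Finset.mem_insert_self _ _
          have he2f : e2 ∈ G.edges.filter (fun e => v ∈ e) := by
            rw [hpair]; exact Finset.mem_insert_of_mem (Finset.mem_singleton_self _)
          have hve1 : v ∈ e1 := (Finset.mem_filter.mp he1f).2
          have hve2 : v ∈ e2 := (Finset.mem_filter.mp he2f).2
          obtain ⟨u, rfl⟩ := Sym2.mem_iff_exists.mp hve1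
          obtain ⟨w2, rfl⟩ := Sym2.mem_iff_exists.mp hve2
          have huv : u ≠ v := fun h =>
            G.not_isDiag _ (Finset.mem_filter.mp he1f).1 (Sym2.mk_isDiag_iff.mpr h.symm)
          have hw2v : w2 ≠ v := fun h =>
            G.not_isDiag _ (Finset.mem_filter.mp he2f).1 (Sym2.mk_isDiag_iff.mpr h.symm)
          have huw2 : u ≠ w2 := fun h => hne (by rw [h])
          exact deg2_reduce G hc.1 v u w2 hvV huv hw2v huw2 hpair
      obtain ⟨G'', hG''c, hG''v, hmeas, hlen⟩ := hG''
      have hG''connects : G''.Connects M :=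
        ⟨hG''c, fun m hm => hG''v ▸ Finset.mem_erase.mpr ⟨fun h => hvM (h ▸ hm), hc.2 m hm⟩⟩
      obtain ⟨G', h1, h2, h3⟩ := ih G'' (by omega) hG''connects
      exact ⟨G', h1, h2.trans hlen, h3⟩
    · push_neg at hdeg
      have hsp : Spanning G.verts G.edges := hc.1.2
      obtain ⟨E', hE'sub, hE'sp, hE'min⟩ := exists_minimal_spanning G.verts G.edges hsp
      by_cases hEE : E' = G.edges
      · exfalso
        rw [hEE] at hE'min
        have hcount := card_le_of_minimal_spanning G.edges.card G.verts G.edges le_rfl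
          hc.1.1 G.mem_verts_of_mem_edges G.not_isDiag hsp hE'min
        have hhs := handshake G
        have hdegM : ∀ x ∈ G.verts, 1 ≤ (G.edges.filter (fun e => x ∈ e)).card := by
          intro x hx
          obtain ⟨z, hzV, hzx⟩ := Finset.exists_mem_ne (show 1 < G.verts.card by omega) x
          exact degree_pos G hc.1 hx hzV (Ne.symm hzx)
        set V1 := G.verts.filter (· ∈ M) with hV1
        set V2 := G.verts.filter (fun x => ¬ x ∈ M) with hV2
        have hsplit : ∑ x ∈ V1, (G.edges.filter (fun e => x ∈ e)).card
            + ∑ x ∈ V2, (G.edges.filter (fun e => x ∈ e)).card = 2 * G.edges.card := by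
          rw [hV1, hV2, Finset.sum_filter_add_sum_filter_not, hhs]
        have h1 : V1.card * 1 ≤ ∑ x ∈ V1, (G.edges.filter (fun e => x ∈ e)).card := by
          have := Finset.card_nsmul_le_sum V1 (fun x => (G.edges.filter (fun e => x ∈ e)).card)
            1 (fun x hx => hdegM x (Finset.mem_filter.mp hx).1)
          simpa using this
        have h2 : V2.card * 3 ≤ ∑ x ∈ V2, (G.edges.filter (fun e => x ∈ e)).card := by
          have := Finset.card_nsmul_le_sum V2 (fun x => (G.edges.filter (fun e => x ∈ e)).card)
            3 (fun x hx => by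
              have hx' := Finset.mem_filter.mp hx
              exact hdeg x hx'.1 hx'.2)
          simpa [mul_comm] using this
        have hV1M : V1.card ≤ M.card :=
          Finset.card_le_card (fun x hx => (Finset.mem_filter.mp hx).2)
        have hV12 : V1.card + V2.card = G.verts.card := by
          rw [hV1, hV2]
          exact Finset.card_filter_add_card_filter_not (p := (· ∈ M))
        omega
      · have hG2 : GraphOn X :=
          ⟨G.verts, E', fun e he x hx => G.mem_verts_of_mem_edges e (hE'sub he) x hx,
            fun e he => G.not_isDiag e (hE'sub he)⟩
        obtain ⟨G', h1, h2, h3⟩ := ih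
          ⟨G.verts, E', fun e he x hx => G.mem_verts_of_mem_edges e (hE'sub he) x hx,
            fun e he => G.not_isDiag e (hE'sub he)⟩
          (by
            have : E'.card < G.edges.card :=
              Finset.card_lt_card (lt_of_le_of_ne hE'sub hEE)
            dsimp only
            omega)
          ⟨⟨hc.1.1, hE'sp⟩, hc.2⟩
        refine ⟨G', h1, h2.trans ?_, h3⟩
        exact Finset.sum_le_sum_of_subset_of_nonneg hE'sub (fun e _ _ => elen_nonneg e)
def completeOn (M : Finset X) : GraphOn X where
  verts := M
  edges := ((M ×ˢ M).image fun p => s(p.1, p.2)).filter fun e => ¬ e.IsDiag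
  mem_verts_of_mem_edges := by
    intro e he x hx
    obtain ⟨p, hp, rfl⟩ := Finset.mem_image.mp (Finset.mem_filter.mp he).1
    rcases Sym2.mem_iff.mp hx with rfl | rfl
    · exact (Finset.mem_product.mp hp).1
    · exact (Finset.mem_product.mp hp).2
  not_isDiag := fun _ he => (Finset.mem_filter.mp he).2

lemma completeOn_connects (M : Finset X) (hM : M.Nonempty) : (completeOn M).Connects M := by
  refine ⟨⟨hM, ?_⟩, fun m hm => hm⟩
  intro x hx y hy
  by_cases hxy : x = y
  · rw [hxy]
  · refine Relation.ReflTransGen.single ?_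
    show s(x, y) ∈ (completeOn M).edges
    refine Finset.mem_filter.mpr ⟨Finset.mem_image.mpr ⟨(x, y),
      Finset.mem_product.mpr ⟨hx, hy⟩, rfl⟩, ?_⟩
    rw [Sym2.mk_isDiag_iff]
    exact hxy

def realize {N : ℕ} (v : Fin N → X) (P : Finset (Sym2 (Fin N))) : GraphOn X where
  verts := Finset.univ.image v
  edges := (P.image (Sym2.map v)).filter (fun e => ¬ e.IsDiag)
  mem_verts_of_mem_edges := by
    intro e he x hx
    obtain ⟨p, hp, rfl⟩ := Finset.mem_image.mp (Finset.mem_filter.mp he).1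
    obtain ⟨i, _, rfl⟩ := Sym2.mem_map.mp hx
    exact Finset.mem_image.mpr ⟨i, Finset.mem_univ i, rfl⟩
  not_isDiag := fun _ he => (Finset.mem_filter.mp he).2

lemma realize_length_le [MetricSpace X] {N : ℕ} (v : Fin N → X) (P : Finset (Sym2 (Fin N))) :
    (realize v P).length ≤ ∑ p ∈ P, elen (Sym2.map v p) := by
  calc (realize v P).length ≤ ∑ e ∈ P.image (Sym2.map v), elen e :=
        Finset.sum_le_sum_of_subset_of_nonneg (Finset.filter_subset _ _)
          (fun e _ _ => elen_nonneg e)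
    _ ≤ ∑ p ∈ P, elen (Sym2.map v p) := sum_image_le _ _ _ elen_nonneg

lemma realize_connects {N : ℕ} (hN : 0 < N) (v : Fin N → X) (P : Finset (Sym2 (Fin N)))
    (hP : ∀ i j : Fin N, Relation.ReflTransGen (AdjE P) i j)
    (M : Finset X) (hM : ∀ m ∈ M, ∃ i, v i = m) :
    (realize v P).Connects M := by
  have hconn : ∀ i j : Fin N,
      Relation.ReflTransGen (AdjE (realize v P).edges) (v i) (v j) := by
    intro i j
    refine rtg_map v ?_ (hP i j)
    intro a b hab
    by_cases hvab : v a = v b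
    · rw [hvab]
    · refine Relation.ReflTransGen.single ?_
      show s(v a, v b) ∈ _
      refine Finset.mem_filter.mpr ⟨Finset.mem_image.mpr
        ⟨s(a, b), hab, Sym2.map_pair_eq v a b⟩, ?_⟩
      rw [Sym2.mk_isDiag_iff]
      exact hvab
  refine ⟨⟨⟨v ⟨0, hN⟩, Finset.mem_image.mpr ⟨⟨0, hN⟩, Finset.mem_univ _, rfl⟩⟩, ?_⟩, ?_⟩
  · intro x hx y hy
    obtain ⟨i, _, rfl⟩ := Finset.mem_image.mp hx
    obtain ⟨j, _, rfl⟩ := Finset.mem_image.mp hy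
    exact hconn i j
  · intro m hm
    obtain ⟨i, rfl⟩ := hM m hm
    exact Finset.mem_image.mpr ⟨i, Finset.mem_univ i, rfl⟩

lemma sym2_map_id_of_mem (f : X → X) (e : Sym2 X) :
    (∀ x ∈ e, f x = x) → Sym2.map f e = e := by
  induction e using Sym2.ind with
  | _ a b =>
    intro h
    rw [Sym2.map_pair_eq, h a (Sym2.mem_mk_left a b), h b (Sym2.mem_mk_right a b)]

lemma encode [MetricSpace X] {N : ℕ} (hN : 0 < N) (G : GraphOn X) (hG : G.IsConnected)
    (hcard : G.verts.card ≤ N) :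
    ∃ (σ : Fin N → X) (P : Finset (Sym2 (Fin N))),
      (∀ i, σ i ∈ G.verts) ∧ (∀ m ∈ G.verts, ∃ i, σ i = m) ∧
      (∀ i j : Fin N, Relation.ReflTransGen (AdjE P) i j) ∧
      ∑ p ∈ P, elen (Sym2.map σ p) = G.length := by
  classical
  set n := G.verts.card with hn
  set eF := G.verts.equivFin with heF
  obtain ⟨x0, hx0⟩ := hG.1
  set σ : Fin N → X :=
    fun i => if h : (i : ℕ) < n then ((eF.symm ⟨(i : ℕ), h⟩ : G.verts) : X) else x0 with hσ
  set τ : X → Fin N := fun x => if h : x ∈ G.verts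
      then ⟨((eF ⟨x, h⟩ : Fin n) : ℕ), lt_of_lt_of_le (eF ⟨x, h⟩).2 hcard⟩ else ⟨0, hN⟩ with hτ
  have hσmem : ∀ i, σ i ∈ G.verts := by
    intro i
    rw [hσ]
    dsimp only
    split
    · exact (eF.symm _).2
    · exact hx0
  have hτlt : ∀ x (h : x ∈ G.verts), ((τ x : Fin N) : ℕ) < n := by
    intro x h
    rw [hτ]
    dsimp only
    rw [dif_pos h]
    exact (eF ⟨x, h⟩).2
  have hστ : ∀ x, x ∈ G.verts → σ (τ x) = x := by
    intro x h
    rw [hτ]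
    dsimp only
    rw [dif_pos h, hσ]
    dsimp only
    rw [dif_pos ((eF ⟨x, h⟩).2)]
    have h1 : (⟨((eF ⟨x, h⟩ : Fin n) : ℕ), (eF ⟨x, h⟩).2⟩ : Fin n) = eF ⟨x, h⟩ :=
      Fin.ext rfl
    rw [h1, Equiv.symm_apply_apply]
  have hτσ : ∀ (i : Fin N), (i : ℕ) < n → τ (σ i) = i := by
    intro i h
    have hmem : σ i ∈ G.verts := hσmem i
    rw [hτ]
    dsimp only
    rw [dif_pos hmem]
    have h1 : (⟨σ i, hmem⟩ : G.verts) = eF.symm ⟨(i : ℕ), h⟩ := by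
      apply Subtype.ext
      show σ i = _
      rw [hσ]
      dsimp only
      rw [dif_pos h]
    apply Fin.ext
    show ((eF ⟨σ i, hmem⟩ : Fin n) : ℕ) = (i : ℕ)
    rw [h1, Equiv.apply_symm_apply]
  set P : Finset (Sym2 (Fin N)) := (G.edges.image (Sym2.map τ)) ∪
    ((Finset.univ.filter (fun i : Fin N => n ≤ (i : ℕ))).image (fun i => s(i, τ x0))) with hP
  have hinv : ∀ e ∈ G.edges, Sym2.map σ (Sym2.map τ e) = e := by
    intro e he
    rw [Sym2.map_map]
    exact sym2_map_id_of_mem _ _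
      (fun x hx => hστ x (G.mem_verts_of_mem_edges e he x hx))
  have hPconn : ∀ i j : Fin N, Relation.ReflTransGen (AdjE P) i j := by
    have hall : ∀ i : Fin N, Relation.ReflTransGen (AdjE P) i (τ x0) := by
      intro i
      by_cases h : (i : ℕ) < n
      · have hwalk := hG.2 (σ i) (hσmem i) x0 hx0
        have := rtg_map τ (fun a b hab => Relation.ReflTransGen.single
          (show AdjE P (τ a) (τ b) from Finset.mem_union_left _
            (Finset.mem_image.mpr ⟨s(a, b), hab, Sym2.map_pair_eq τ a b⟩))) hwalk
        rwa [hτσ i h] at this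
      · refine Relation.ReflTransGen.single ?_
        show s(i, τ x0) ∈ P
        exact Finset.mem_union_right _ (Finset.mem_image.mpr
          ⟨i, Finset.mem_filter.mpr ⟨Finset.mem_univ _, le_of_not_gt h⟩, rfl⟩)
    intro i j
    exact (hall i).trans (rtg_symm (hall j))
  refine ⟨σ, P, hσmem, fun m hm => ⟨τ m, hστ m hm⟩, hPconn, ?_⟩
  have hdisj : Disjoint (G.edges.image (Sym2.map τ))
      ((Finset.univ.filter (fun i : Fin N => n ≤ (i : ℕ))).image (fun i => s(i, τ x0))) := by
    rw [Finset.disjoint_left]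
    intro p hp1 hp2
    obtain ⟨e, he, rfl⟩ := Finset.mem_image.mp hp1
    obtain ⟨i, hi, hpe⟩ := Finset.mem_image.mp hp2
    have hin : i ∈ Sym2.map τ e := by rw [← hpe]; exact Sym2.mem_mk_left _ _
    obtain ⟨a, ha, hai⟩ := Sym2.mem_map.mp hin
    have hlt := hτlt a (G.mem_verts_of_mem_edges e he a ha)
    rw [hai] at hlt
    exact absurd hlt (not_lt.mpr (Finset.mem_filter.mp hi).2)
  rw [hP, Finset.sum_union hdisj]
  have h1 : ∑ p ∈ G.edges.image (Sym2.map τ), elen (Sym2.map σ p) = ∑ e ∈ G.edges, elen e := by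
    rw [Finset.sum_image (fun e1 h1 e2 h2 heq => by
      rw [← hinv e1 h1, ← hinv e2 h2, heq])]
    exact Finset.sum_congr rfl (fun e he => by rw [hinv e he])
  have h2 : ∑ p ∈ (Finset.univ.filter (fun i : Fin N => n ≤ (i : ℕ))).image
      (fun i => s(i, τ x0)), elen (Sym2.map σ p) = 0 := by
    apply Finset.sum_eq_zero
    intro p hp
    obtain ⟨i, hi, rfl⟩ := Finset.mem_image.mp hp
    rw [Sym2.map_pair_eq]
    have hσi : σ i = x0 := by
      rw [hσ]
      dsimp only
      rw [dif_neg (not_lt.mpr (Finset.mem_filter.mp hi).2)]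
    rw [hσi, hστ x0 hx0, elen_mk, dist_self]
  rw [h1, h2, length_eq]
  ring
end SMTAux

theorem SMT_nonempty_of_proper {X : Type*} [MetricSpace X]
    (hproper : ∀ A : Set X, IsClosed A → Bornology.IsBounded A → IsCompact A)
    (M : Finset X) (hM : M.Nonempty) :
    ∃ G : GraphOn X, G.Connects M ∧ G.length = smt X M := by
  classical
  set c := smt X M with hc
  set Sset := {l : ℝ | ∃ G : GraphOn X, G.Connects M ∧ l = G.length} with hSset
  have hcS : c = sInf Sset := rfl
  have hSne : Sset.Nonempty :=
    ⟨(SMTAux.completeOn M).length, SMTAux.completeOn M, SMTAux.completeOn_connects M hM, rfl⟩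
  have hSbdd : BddBelow Sset := ⟨0, fun l ⟨G, _, hl⟩ => hl ▸ SMTAux.length_nonneg G⟩
  have hc0 : 0 ≤ c := by
    rw [hcS]
    exact le_csInf hSne (fun l ⟨G, _, hl⟩ => hl ▸ SMTAux.length_nonneg G)
  obtain ⟨m₀, hm₀⟩ := hM
  set N := 2 * M.card with hN
  have hNpos : 0 < N := by
    have := Finset.card_pos.mpr ⟨m₀, hm₀⟩
    omega
  set B := Metric.closedBall m₀ (c + 1) with hB
  have hBcompact : IsCompact B := hproper _ Metric.isClosed_closedBall Metric.isBounded_closedBall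
  set A := {v : Fin N → X | (∀ i, v i ∈ B) ∧ ∀ m ∈ M, ∃ i, v i = m} with hA
  have hAclosed : IsClosed A := by
    have hrw : A = (⋂ i, (fun v : Fin N → X => v i) ⁻¹' B) ∩
        (⋂ m ∈ M, ⋃ i : Fin N, (fun v : Fin N → X => v i) ⁻¹' {m}) := by
      ext v
      constructor
      · rintro ⟨h1, h2⟩
        refine ⟨Set.mem_iInter.mpr h1, Set.mem_iInter₂.mpr ?_⟩
        intro m hm
        obtain ⟨i, hi⟩ := h2 m hm
        exact Set.mem_iUnion.mpr ⟨i, hi⟩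
      · rintro ⟨h1, h2⟩
        refine ⟨fun i => Set.mem_iInter.mp h1 i, fun m hm => ?_⟩
        obtain ⟨i, hi⟩ := Set.mem_iUnion.mp (Set.mem_iInter₂.mp h2 m hm)
        exact ⟨i, hi⟩
    rw [hrw]
    refine IsClosed.inter (isClosed_iInter fun i =>
      IsClosed.preimage (continuous_apply i) Metric.isClosed_closedBall)
      (isClosed_biInter fun m _ => ?_)
    exact isClosed_iUnion_of_finite fun i =>
      IsClosed.preimage (continuous_apply i) isClosed_singleton
  have hAcompact : IsCompact A := by
    have hsub : A ⊆ Set.pi Set.univ (fun _ : Fin N => B) := fun v hv i _ => hv.1 i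
    exact (isCompact_univ_pi fun _ => hBcompact).of_isClosed_subset hAclosed hsub
  set f : Finset (Sym2 (Fin N)) → (Fin N → X) → ℝ :=
    fun P v => ∑ p ∈ P, SMTAux.elen (Sym2.map v p) with hf
  have hfcont : ∀ P, Continuous (f P) := by
    intro P
    apply continuous_finset_sum
    intro p _
    induction p using Sym2.ind with
    | _ i j =>
      simp only [Sym2.map_pair_eq, SMTAux.elen_mk]
      exact Continuous.dist (continuous_apply i) (continuous_apply j)
  have key : ∀ δ : ℝ, 0 < δ → δ ≤ 1 → ∃ (P : Finset (Sym2 (Fin N))) (σ : Fin N → X),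
      (∀ i j : Fin N, Relation.ReflTransGen (SMTAux.AdjE P) i j) ∧ σ ∈ A ∧ f P σ < c + δ := by
    intro δ hδ hδ1
    obtain ⟨l, hlS, hlt⟩ := exists_lt_of_csInf_lt hSne (by rw [← hcS]; linarith : sInf Sset < c + δ)
    obtain ⟨Gw, hGwc, rfl⟩ := hlS
    obtain ⟨G', hG'c, hG'le, hG'card⟩ :=
      SMTAux.reduce M ⟨m₀, hm₀⟩ (Gw.verts.card + Gw.edges.card) Gw le_rfl hGwc
    have hG'len : G'.length < c + δ := lt_of_le_of_lt hG'le hlt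
    have hvertB : ∀ x ∈ G'.verts, x ∈ B := by
      intro x hx
      have hm₀v : m₀ ∈ G'.verts := hG'c.2 m₀ hm₀
      have hwalk := hG'c.1.2 x hx m₀ hm₀v
      have hdist := SMTAux.dist_le_sum G'.edges.card G'.edges le_rfl hwalk
      rw [← SMTAux.length_eq] at hdist
      rw [hB]
      exact Metric.mem_closedBall.mpr (by linarith)
    obtain ⟨σ, P, hσV, hσcov, hPconn, hPsum⟩ :=
      SMTAux.encode hNpos G' hG'c.1 (by omega : G'.verts.card ≤ N)
    refine ⟨P, σ, hPconn,
      ⟨fun i => hvertB _ (hσV i), fun m hm => hσcov m (hG'c.2 m hm)⟩, ?_⟩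
    show (∑ p ∈ P, SMTAux.elen (Sym2.map σ p)) < c + δ
    rw [hPsum]
    exact hG'len
  obtain ⟨P1, σ1, hP1conn, hσ1A, _⟩ := key 1 one_pos le_rfl
  have hAne : A.Nonempty := ⟨σ1, hσ1A⟩
  have hminP : ∀ P, ∃ v, v ∈ A ∧ ∀ w ∈ A, f P v ≤ f P w := by
    intro P
    obtain ⟨v, hvA, hmin⟩ := hAcompact.exists_isMinOn hAne (hfcont P).continuousOn
    exact ⟨v, hvA, fun w hw => hmin hw⟩
  choose vf hvfA hvfmin using hminP
  set ConnP : Finset (Sym2 (Fin N)) → Prop :=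
    fun P => ∀ i j : Fin N, Relation.ReflTransGen (SMTAux.AdjE P) i j with hConnP
  set PS := Finset.univ.filter ConnP with hPS
  have hP1PS : P1 ∈ PS := Finset.mem_filter.mpr ⟨Finset.mem_univ _, hP1conn⟩
  obtain ⟨P₀, hP₀PS, hP₀min⟩ := Finset.exists_min_image PS (fun P => f P (vf P)) ⟨P1, hP1PS⟩
  have hP₀conn : ConnP P₀ := (Finset.mem_filter.mp hP₀PS).2
  set G₀ := SMTAux.realize (vf P₀) P₀ with hG₀
  have hG₀connects : G₀.Connects M :=
    SMTAux.realize_connects hNpos _ _ hP₀conn M (fun m hm => (hvfA P₀).2 m hm)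
  have hG₀len : G₀.length ≤ f P₀ (vf P₀) := SMTAux.realize_length_le _ _
  have hupper : G₀.length ≤ c := by
    by_contra hcon
    push_neg at hcon
    set δ := min 1 ((G₀.length - c) / 2) with hδ
    have hδpos : 0 < δ := lt_min one_pos (by linarith)
    obtain ⟨P', σ', hP'conn, hσ'A, hflt⟩ := key δ hδpos (min_le_left _ _)
    have h1 : f P₀ (vf P₀) ≤ f P' (vf P') :=
      hP₀min P' (Finset.mem_filter.mpr ⟨Finset.mem_univ _, hP'conn⟩)
    have h2 : f P' (vf P') ≤ f P' σ' := hvfmin P' σ' hσ'A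
    have h3 : δ ≤ (G₀.length - c) / 2 := min_le_right _ _
    linarith
  have hlower : c ≤ G₀.length := by
    rw [hcS]
    exact csInf_le hSbdd ⟨G₀, hG₀connects, rfl⟩
  exact ⟨G₀, hG₀connects, le_antisymm hupper hlower⟩
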